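/- Let n ≥ 9 be odd and C_n the cycle on n vertices. For every r ≥ 3 and every r-coloring φ of C_n, there is a proper r-coloring of C_n differing from φ on at most 1 + ⌊(n−1)/2⌋ vertices. -/

import Mathlib

/-- A (possibly improper) `r`-coloring is proper if adjacent vertices get different colors. -/
def IsProperColoring {V : Type*} (G : SimpleGraph V) {r : ℕ} (φ : V → Fin r) : Prop :=
  ∀ ⦃u v : V⦄, G.Adj u v → φ u ≠ φ v

/-- The Hamming distance between two colorings. -/
noncomputable def colDist {V : Type*} {r : ℕ} (φ ψ : V → Fin r) : ℕ :=
  {v | φ v ≠ ψ v}.ncard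

lemma exists_ne_ne {r : ℕ} (hr : 3 ≤ r) (a b : Fin r) : ∃ c : Fin r, c ≠ a ∧ c ≠ b := by
  by_contra h
  push_neg at h
  have hsub : (Finset.univ : Finset (Fin r)) ⊆ {a, b} := by
    intro c _
    rcases eq_or_ne c a with h1 | h1
    · simp [h1]
    · simp [h c h1]
  have h1 := Finset.card_le_card hsub
  simp only [Finset.card_univ, Fintype.card_fin] at h1
  have h2 : ({a, b} : Finset (Fin r)).card ≤ 2 := by
    apply (Finset.card_insert_le _ _).trans
    simp
  omega

noncomputable def pickNe {r : ℕ} (hr : 3 ≤ r) (a b : Fin r) : Fin r :=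
  (exists_ne_ne hr a b).choose

lemma pickNe_ne_left {r : ℕ} (hr : 3 ≤ r) (a b : Fin r) : pickNe hr a b ≠ a :=
  (exists_ne_ne hr a b).choose_spec.1

lemma pickNe_ne_right {r : ℕ} (hr : 3 ≤ r) (a b : Fin r) : pickNe hr a b ≠ b :=
  (exists_ne_ne hr a b).choose_spec.2

lemma card_filter_odd_range (n : ℕ) : ((Finset.range n).filter (fun m => Odd m)).card = n / 2 := by
  induction n with
  | zero => simp
  | succ k ih =>
    rw [Finset.range_add_one, Finset.filter_insert]
    by_cases hk : Odd k
    · rw [if_pos hk, Finset.card_insert_of_notMem (by simp), ih]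
      rcases hk with ⟨j, hj⟩
      omega
    · rw [if_neg hk, ih]
      rw [Nat.not_odd_iff_even] at hk
      rcases hk with ⟨j, hj⟩
      omega

/-- For an odd cycle on n ≥ 9 vertices, every r-coloring (r ≥ 3) can be made proper by
recoloring at most 1 + ⌊(n-1)/2⌋ vertices. -/
theorem odd_cycle_fix {n : ℕ} (hn : 9 ≤ n) (hodd : Odd n)
    (C : SimpleGraph (ZMod n))
    (hC : ∀ u v : ZMod n, C.Adj u v ↔ u - v = 1 ∨ v - u = 1)
    (r : ℕ) (hr : 3 ≤ r) (φ : ZMod n → Fin r) :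
    ∃ ψ : ZMod n → Fin r, IsProperColoring C ψ ∧ colDist φ ψ ≤ 1 + (n - 1) / 2 := by
  haveI : NeZero n := ⟨by omega⟩
  classical
  set ψ : ZMod n → Fin r := fun v =>
    if v.val = n - 1 then pickNe hr (pickNe hr (φ (v - 2)) (φ v)) (φ (v + 1))
    else if Odd v.val then pickNe hr (φ (v - 1)) (φ (v + 1))
    else φ v with hψ
  -- basic val facts
  have hvlt : ∀ u : ZMod n, u.val < n := fun u => ZMod.val_lt u
  have hone : (1 : ZMod n).val = 1 := ZMod.val_one'' (by omega)
  have hval_add : ∀ u : ZMod n, u.val < n - 1 → (u + 1).val = u.val + 1 := by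
    intro u hu
    rw [ZMod.val_add, hone, Nat.mod_eq_of_lt (by omega)]
  have hval_top : ∀ u : ZMod n, u.val = n - 1 → (u + 1).val = 0 := by
    intro u hu
    have h1 : u = ((n - 1 : ℕ) : ZMod n) := by
      rw [← hu, ZMod.natCast_zmod_val]
    rw [h1]
    have h2 : ((n - 1 : ℕ) : ZMod n) + 1 = (((n - 1) + 1 : ℕ) : ZMod n) := by
      push_cast
      ring
    rw [h2, Nat.sub_add_cancel (by omega), ZMod.natCast_self, ZMod.val_zero]
  -- the key adjacent-difference lemma
  have key : ∀ u : ZMod n, ψ u ≠ ψ (u + 1) := by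
    intro u
    rcases Nat.lt_or_ge u.val (n - 1) with hu | hu
    · -- u.val < n - 1
      have hu1 : (u + 1).val = u.val + 1 := hval_add u hu
      by_cases ho : Odd u.val
      · -- u odd, u+1 even
        have hne : u.val ≠ n - 1 := by omega
        have hue : ¬ Odd (u.val + 1) := by simp [Nat.odd_add_one, ho]
        rcases Nat.lt_or_ge u.val (n - 2) with hu2 | hu2
        · -- u+1 not top
          have : (u + 1).val ≠ n - 1 := by omega
          simp only [hψ, if_neg hne, if_pos ho, if_neg this, hu1, if_neg hue]
          exact pickNe_ne_right hr _ _
        · -- u.val = n - 2, u+1 is top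
          have htop : (u + 1).val = n - 1 := by omega
          simp only [hψ, if_neg hne, if_pos ho, if_pos htop]
          have e1 : u + 1 - 2 = u - 1 := by ring
          have e2 : u + 1 - 1 = u := by ring
          rw [e1]
          have : φ (u + 1) = φ (u + 1) := rfl
          intro h
          exact pickNe_ne_left hr (pickNe hr (φ (u - 1)) (φ (u + 1))) (φ (u + 1 + 1)) h.symm
      · -- u even, u+1 odd (since n-1 even, u.val ≠ n-1 automatically here)
        have hne : u.val ≠ n - 1 := by omega
        have ho1 : Odd (u.val + 1) := Even.add_one (Nat.not_odd_iff_even.mp ho)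
        have hne1 : (u + 1).val ≠ n - 1 := by
          rw [hu1]
          intro h
          rcases hodd with ⟨k, hk⟩
          rcases ho1 with ⟨j, hj⟩
          omega
        simp only [hψ, if_neg hne, if_neg ho, if_neg hne1, hu1, if_pos ho1]
        have e2 : u + 1 - 1 = u := by ring
        rw [e2]
        intro h
        exact pickNe_ne_left hr (φ u) (φ (u + 1 + 1)) h.symm
    · -- u.val = n - 1 (top), u + 1 has val 0, even, not top
      have hu' : u.val = n - 1 := by have := hvlt u; omega
      have h0 : (u + 1).val = 0 := hval_top u hu'
      have hne1 : (u + 1).val ≠ n - 1 := by omega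
      have ho1 : ¬ Odd (u + 1).val := by rw [h0]; simp
      simp only [hψ, if_pos hu', if_neg hne1, if_neg ho1]
      exact pickNe_ne_right hr _ _
  refine ⟨ψ, ?_, ?_⟩
  · intro u v hadj
    rw [hC] at hadj
    rcases hadj with h | h
    · have : u = v + 1 := by linear_combination h
      rw [this]
      exact (key v).symm
    · have : v = u + 1 := by linear_combination h
      rw [this]
      exact key u
  · -- distance bound
    have hsub : {v : ZMod n | φ v ≠ ψ v} ⊆
        ↑((Finset.univ : Finset (ZMod n)).filter (fun v => Odd v.val ∨ v.val = n - 1)) := by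
      intro v hv
      simp only [Finset.coe_filter, Set.mem_setOf_eq, Finset.mem_univ, true_and]
      by_contra h
      push_neg at h
      apply hv
      simp only [hψ, if_neg h.2, if_neg h.1]
    calc colDist φ ψ ≤ ((Finset.univ : Finset (ZMod n)).filter
          (fun v => Odd v.val ∨ v.val = n - 1)).card := by
          rw [colDist, ← Set.ncard_coe_finset]
          exact Set.ncard_le_ncard hsub (Finset.finite_toSet _)
      _ ≤ 1 + (n - 1) / 2 := by
          have hbij : ((Finset.univ : Finset (ZMod n)).filter
              (fun v => Odd v.val ∨ v.val = n - 1)).card =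
              ((Finset.range n).filter (fun m => Odd m ∨ m = n - 1)).card := by
            apply Finset.card_nbij (fun v => v.val)
            · intro v hv
              simp only [Finset.mem_coe, Finset.mem_filter, Finset.mem_univ, true_and] at hv
              simp [Finset.mem_filter, Finset.mem_range, hvlt v, hv]
            · intro a ha b hb hab
              exact ZMod.val_injective n hab
            · intro m hm
              simp only [Finset.coe_filter, Finset.mem_range, Set.mem_setOf_eq] at hm
              refine ⟨(m : ZMod n), ?_, ?_⟩
              · simp [Set.mem_setOf_eq, ZMod.val_cast_of_lt hm.1, hm.2]
              · exact ZMod.val_cast_of_lt hm.1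
          rw [hbij]
          have : ((Finset.range n).filter (fun m => Odd m ∨ m = n - 1)) ⊆
              ((Finset.range n).filter (fun m => Odd m)) ∪ {n - 1} := by
            intro m hm
            simp only [Finset.mem_filter, Finset.mem_range] at hm
            rcases hm.2 with h | h
            · exact Finset.mem_union_left _ (Finset.mem_filter.mpr ⟨by simp [hm.1], h⟩)
            · exact Finset.mem_union_right _ (by simp [h])
          calc ((Finset.range n).filter (fun m => Odd m ∨ m = n - 1)).card
              ≤ (((Finset.range n).filter (fun m => Odd m)) ∪ {n - 1}).card :=
                Finset.card_le_card this
            _ ≤ ((Finset.range n).filter (fun m => Odd m)).card + 1 :=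
                (Finset.card_union_le _ _).trans (by simp)
            _ ≤ 1 + (n - 1) / 2 := by
                rw [card_filter_odd_range]
                obtain ⟨k, hk⟩ := hodd
                omega
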